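/- Suppose every ≤_U-decreasing sequence of U-constraints of length at most 2^κ has a ≤_U-lower bound, and |B_0| = 2^κ. Then for every U-constraint H there is H' ≤_U H such that Fil(H') is an ultrafilter on B_0. -/

import Mathlib

open Filter Set

universe u

variable {X I 𝔹 : Type u}

/-- The domain of `b(H,A)`: `{κ_x : x ∈ dom(H) ∩ A}`.  Here `X` plays the role of
`P_κ(λ)`, `κx : X → I` is the map `x ↦ κ_x = x ∩ κ`, and `DH = dom(H)`. -/
def bdom (κx : X → I) (DH A : Set X) : Set I := κx '' (DH ∩ A)

/-- The value `b(H,A)(i) = ⋁ {H(x) : x ∈ dom(H) ∩ A, κ_x = i}`, a Boolean supremum in the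
complete Boolean algebra `𝔹` (an ambient algebra containing the algebras `B(α,κ)`). -/
def bval [CompleteBooleanAlgebra 𝔹] (κx : X → I) (DH : Set X) (H : X → 𝔹)
    (A : Set X) (i : I) : 𝔹 :=
  sSup (H '' {x | x ∈ DH ∩ A ∧ κx x = i})

/-- `[h]_{U₀} ∈ Fil(H)`: the filter `Fil(H)` on `B₀` is generated by the (downward directed)
base `{[b(H,A)]_{U₀} : A ∈ U}`, so membership means that `[b(H,A)]_{U₀} ≤ [h]_{U₀}` for some
`A ∈ U`.  Here `U₀ = U.map κx` is the projection of `U` to `κ`, an element of `B₀` is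
represented by a function `h : I → 𝔹`, and `≤` is computed `U₀`-almost everywhere (on the
domain of `b(H,A)`). -/
def FilMem [CompleteBooleanAlgebra 𝔹] (U : Ultrafilter X) (κx : X → I)
    (DH : Set X) (H : X → 𝔹) (h : I → 𝔹) : Prop :=
  ∃ A ∈ U, {i | i ∈ bdom κx DH A ∧ bval κx DH H A i ≤ h i} ∈ U.map κx

/-- A `U`-constraint: a function `H` with domain `D ∈ U` whose value at `x` is a nonzero
element of the algebra `Bsub (κ_x)` (abstracting `H(x) ∈ C(κ_x,κ) ⊆ B(κ_x,κ)`). -/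
structure UConstraint [CompleteBooleanAlgebra 𝔹] (U : Ultrafilter X) (κx : X → I)
    (Bsub : I → Set 𝔹) where
  D : Set X
  H : X → 𝔹
  D_mem : D ∈ U
  val_mem : ∀ x ∈ D, H x ∈ Bsub (κx x)
  ne_bot : ∀ x ∈ D, H x ≠ ⊥

/-- `c ≤_U d`: `c(x) ≤ d(x)` for `U`-almost every `x`. -/
def leU [CompleteBooleanAlgebra 𝔹] {U : Ultrafilter X} {κx : X → I} {Bsub : I → Set 𝔹}
    (c d : UConstraint U κx Bsub) : Prop :=
  {x | x ∈ c.D ∧ x ∈ d.D ∧ c.H x ≤ d.H x} ∈ U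

attribute [local instance] Classical.propDecidable

section Aux

variable [CompleteBooleanAlgebra 𝔹] {U : Ultrafilter X} {κx : X → I} {Bsub : I → Set 𝔹}

lemma leU_refl (c : UConstraint U κx Bsub) : leU c c :=
  Filter.mem_of_superset c.D_mem fun _ hx => ⟨hx, hx, le_rfl⟩

lemma leU_trans {a b c : UConstraint U κx Bsub} (h1 : leU a b) (h2 : leU b c) : leU a c := by
  have := Filter.inter_mem h1 h2
  exact Filter.mem_of_superset this fun x hx => ⟨hx.1.1, hx.2.2.1, hx.1.2.2.trans hx.2.2.2⟩

lemma image_mem_map' {S : Set X} (hS : S ∈ U) : κx '' S ∈ U.map κx :=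
  Ultrafilter.mem_map.2 (Filter.mem_of_superset hS (Set.subset_preimage_image _ _))

lemma filMem_mono {c'' c' : UConstraint U κx Bsub} (h : leU c'' c') {f : I → 𝔹}
    (hf : FilMem U κx c'.D c'.H f) : FilMem U κx c''.D c''.H f := by
  obtain ⟨A, hA, hS⟩ := hf
  set E := {x | x ∈ c''.D ∧ x ∈ c'.D ∧ c''.H x ≤ c'.H x} with hE
  refine ⟨A ∩ E, Filter.inter_mem hA h, ?_⟩
  have hT : κx '' (c''.D ∩ (A ∩ E)) ∈ U.map κx :=
    image_mem_map' (Filter.inter_mem c''.D_mem (Filter.inter_mem hA h))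
  refine Filter.mem_of_superset (Filter.inter_mem hS hT) ?_
  rintro i ⟨⟨_, hbv⟩, hiT⟩
  refine ⟨hiT, ?_⟩
  refine sSup_le ?_
  rintro b ⟨x, ⟨⟨hxD, hxA, hxE⟩, hxi⟩, rfl⟩
  have h1 : c''.H x ≤ c'.H x := hxE.2.2
  refine h1.trans (le_trans ?_ hbv)
  exact le_sSup ⟨x, ⟨⟨hxE.2.1, hxA⟩, hxi⟩, rfl⟩

lemma filMem_proper (c : UConstraint U κx Bsub) :
    ¬ FilMem U κx c.D c.H (fun _ => (⊥ : 𝔹)) := by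
  rintro ⟨A, hA, hS⟩
  have : {i | i ∈ bdom κx c.D A ∧ bval κx c.D c.H A i ≤ (⊥ : 𝔹)} = ∅ := by
    ext i
    simp only [Set.mem_setOf_eq, Set.mem_empty_iff_false, iff_false, not_and]
    rintro ⟨x, hx, rfl⟩ hle
    refine c.ne_bot x hx.1 (le_bot_iff.1 <| le_trans (le_sSup ?_) hle)
    exact ⟨x, ⟨hx, rfl⟩, rfl⟩
  rw [this] at hS
  exact Filter.empty_notMem _ hS

lemma filMem_congr {c : UConstraint U κx Bsub} {f g : I → 𝔹}
    (h : {i | f i = g i} ∈ U.map κx) (hf : FilMem U κx c.D c.H f) :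
    FilMem U κx c.D c.H g := by
  obtain ⟨A, hA, hS⟩ := hf
  refine ⟨A, hA, Filter.mem_of_superset (Filter.inter_mem hS h) ?_⟩
  rintro i ⟨⟨h1, h2⟩, h3⟩
  exact ⟨h1, h2.trans_eq h3⟩

/-- The decision lemma. -/
lemma decideU (hinf : ∀ i, ∀ a ∈ Bsub i, ∀ b ∈ Bsub i, a ⊓ b ∈ Bsub i)
    (hcompl : ∀ i, ∀ a ∈ Bsub i, aᶜ ∈ Bsub i)
    (d : UConstraint U κx Bsub) (f : I → 𝔹) (hf : ∀ i, f i ∈ Bsub i) :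
    ∃ d' : UConstraint U κx Bsub, leU d' d ∧
      (FilMem U κx d'.D d'.H f ∨ FilMem U κx d'.D d'.H (fun i => (f i)ᶜ)) := by
  classical
  set Apos : Set X := {x | x ∈ d.D ∧ d.H x ⊓ f (κx x) ≠ ⊥} with hApos 
  by_cases hcase : Apos ∈ U
  · refine ⟨⟨Apos, fun x => d.H x ⊓ f (κx x), hcase,
      fun x hx => hinf _ _ (d.val_mem x hx.1) _ (hf _), fun x hx => hx.2⟩, ?_, ?_⟩
    · exact Filter.mem_of_superset hcase fun x hx => ⟨hx, hx.1, inf_le_left⟩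
    · left
      refine ⟨Apos, hcase, ?_⟩
      have hT : κx '' (Apos ∩ Apos) ∈ U.map κx := image_mem_map' (by rwa [Set.inter_self])
      refine Filter.mem_of_superset hT ?_
      rintro i ⟨x, hx, rfl⟩
      refine ⟨⟨x, hx, rfl⟩, sSup_le ?_⟩
      rintro b ⟨y, ⟨_, hyi⟩, rfl⟩
      simpa [hyi] using inf_le_right
  · have hcase' : d.D ∩ Aposᶜ ∈ U :=
      Filter.inter_mem d.D_mem ((Ultrafilter.compl_mem_iff_notMem).2 hcase)
    have hle : ∀ x ∈ d.D ∩ Aposᶜ, d.H x ≤ (f (κx x))ᶜ := by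
      rintro x ⟨hxD, hxc⟩
      have : d.H x ⊓ f (κx x) = ⊥ := by
        by_contra hne
        exact hxc ⟨hxD, hne⟩
      exact le_compl_iff_disjoint_right.2 (disjoint_iff.2 this)
    refine ⟨⟨d.D ∩ Aposᶜ, d.H, hcase', fun x hx => d.val_mem x hx.1,
      fun x hx => d.ne_bot x hx.1⟩, ?_, ?_⟩
    · exact Filter.mem_of_superset hcase' fun x hx => ⟨hx, hx.1, le_rfl⟩
    · right
      refine ⟨d.D ∩ Aposᶜ, hcase', ?_⟩
      have hT : κx '' ((d.D ∩ Aposᶜ) ∩ (d.D ∩ Aposᶜ)) ∈ U.map κx :=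
        image_mem_map' (by rwa [Set.inter_self])
      refine Filter.mem_of_superset hT ?_
      rintro i ⟨x, hx, rfl⟩
      refine ⟨⟨x, hx, rfl⟩, sSup_le ?_⟩
      rintro b ⟨y, ⟨hy, hyi⟩, rfl⟩
      simpa [hyi] using hle y hy.1

end Aux

/-- The transfinite recursion: at each ordinal, take a lower bound of all previous
constraints and then a `Q`-refinement, if one exists (it always will, below `(2^κ).ord`). -/
noncomputable def seqG [CompleteBooleanAlgebra 𝔹] {U : Ultrafilter X} {κx : X → I}
    {Bsub : I → Set 𝔹} (c : UConstraint U κx Bsub)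
    (Q : Ordinal.{u} → UConstraint U κx Bsub → Prop) : Ordinal.{u} → UConstraint U κx Bsub :=
  Ordinal.lt_wf.fix fun o rec =>
    if h : ∃ c', leU c' c ∧ (∀ o' (ho : o' < o), leU c' (rec o' ho)) ∧ Q o c' then h.choose
    else c

lemma seqG_eq [CompleteBooleanAlgebra 𝔹] {U : Ultrafilter X} {κx : X → I}
    {Bsub : I → Set 𝔹} (c : UConstraint U κx Bsub)
    (Q : Ordinal.{u} → UConstraint U κx Bsub → Prop) (o : Ordinal.{u}) :
    seqG c Q o =
      if h : ∃ c', leU c' c ∧ (∀ o' (_ : o' < o), leU c' (seqG c Q o')) ∧ Q o c' then h.choose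
      else c :=
  WellFounded.fix_eq _ _ _

lemma exG [CompleteBooleanAlgebra 𝔹] {U : Ultrafilter X} {κx : X → I}
    {Bsub : I → Set 𝔹} {μ : Ordinal.{u}} (c : UConstraint U κx Bsub)
    (Q : Ordinal.{u} → UConstraint U κx Bsub → Prop)
    (hlb : ∀ o : Ordinal.{u}, o ≤ μ →
      ∀ g : o.ToType → UConstraint U κx Bsub,
        (∀ p q : o.ToType, p ≤ q → leU (g q) (g p)) →
        ∃ d, ∀ p, leU d (g p))
    (hQ : ∀ o : Ordinal.{u}, o ≤ μ → ∀ d : UConstraint U κx Bsub,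
      ∃ d', leU d' d ∧ Q o d') :
    ∀ o ≤ μ, ∃ c', leU c' c ∧ (∀ o' (_ : o' < o), leU c' (seqG c Q o')) ∧ Q o c' := by
  intro o
  induction o using Ordinal.induction with
  | h o IH =>
    intro ho
    have hGspec : ∀ o' (h : o' < o), leU (seqG c Q o') c ∧
        (∀ o'' (_ : o'' < o'), leU (seqG c Q o') (seqG c Q o'')) ∧ Q o' (seqG c Q o') := by
      intro o' h
      have hex := IH o' h (h.le.trans ho)
      rw [seqG_eq, dif_pos hex]
      exact hex.choose_spec
    set g : o.ToType → UConstraint U κx Bsub :=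
      fun p => seqG c Q ((Ordinal.ToType.mk (o := o)).symm p).1 with hg
    have hganti : ∀ p q : o.ToType, p ≤ q → leU (g q) (g p) := by
      intro p q hpq
      rcases eq_or_lt_of_le hpq with rfl | hlt
      · exact leU_refl _
      · have hlt' : ((Ordinal.ToType.mk (o := o)).symm p).1 <
            ((Ordinal.ToType.mk (o := o)).symm q).1 := by
          exact_mod_cast (Ordinal.ToType.mk (o := o)).symm.lt_iff_lt.2 hlt
        exact (hGspec _ ((Ordinal.ToType.mk (o := o)).symm q).2).2.1 _ hlt'
    obtain ⟨c₀, hc₀⟩ := hlb o ho g hganti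
    have hc₀' : ∀ o' (ho' : o' < o), leU c₀ (seqG c Q o') := by
      intro o' ho'
      have := hc₀ ((Ordinal.ToType.mk (o := o)) ⟨o', ho'⟩)
      simpa only [hg, OrderIso.symm_apply_apply] using this
    rcases eq_or_ne o 0 with rfl | hne
    · obtain ⟨d', hd'1, hd'2⟩ := hQ 0 ho c
      exact ⟨d', hd'1, fun o' ho' => absurd ho' (not_lt_zero (a := o')), hd'2⟩
    · have h0 : (0 : Ordinal.{u}) < o := pos_iff_ne_zero.2 hne
      have hbase : leU c₀ c := leU_trans (hc₀' 0 h0) (hGspec 0 h0).1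
      obtain ⟨d', hd'1, hd'2⟩ := hQ o ho c₀
      exact ⟨d', leU_trans hd'1 hbase, fun o' ho' => leU_trans hd'1 (hc₀' o' ho'), hd'2⟩

/-- Suppose every `≤_U`-decreasing sequence of `U`-constraints of length at most `2^κ` has a
`≤_U`-lower bound, and `|B₀| = 2^κ` (witnessed by an enumeration of representatives).  Then
for every `U`-constraint `H` there is `H' ≤_U H` such that `Fil(H')` is an ultrafilter on
`B₀`, i.e. `Fil(H')` is proper and contains `b` or `¬b` for every `b ∈ B₀`. -/
theorem stmt9 [CompleteBooleanAlgebra 𝔹] (U : Ultrafilter X) (κx : X → I)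
    (Bsub : I → Set 𝔹) (κ : Cardinal.{u})
    (hinf : ∀ i, ∀ a ∈ Bsub i, ∀ b ∈ Bsub i, a ⊓ b ∈ Bsub i)
    (hcompl : ∀ i, ∀ a ∈ Bsub i, aᶜ ∈ Bsub i)
    (hlb : ∀ o : Ordinal.{u}, o ≤ ((2 ^ κ : Cardinal.{u})).ord →
      ∀ g : o.ToType → UConstraint U κx Bsub,
        (∀ p q : o.ToType, p ≤ q → leU (g q) (g p)) →
        ∃ c, ∀ p, leU c (g p))
    (henum : ∃ e : (((2 ^ κ : Cardinal.{u})).ord).ToType → (I → 𝔹),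
        (∀ ζ i, e ζ i ∈ Bsub i) ∧
        ∀ f : I → 𝔹, (∀ i, f i ∈ Bsub i) → ∃ ζ, {i | e ζ i = f i} ∈ U.map κx) :
    ∀ c : UConstraint U κx Bsub, ∃ c' : UConstraint U κx Bsub, leU c' c ∧
      (¬ FilMem U κx c'.D c'.H (fun _ => (⊥ : 𝔹))) ∧
      (∀ f : I → 𝔹, (∀ i, f i ∈ Bsub i) →
        FilMem U κx c'.D c'.H f ∨ FilMem U κx c'.D c'.H (fun i => (f i)ᶜ)) := by
  classical
  intro c
  set μ : Ordinal.{u} := ((2 ^ κ : Cardinal.{u})).ord with hμ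
  obtain ⟨e, he1, he2⟩ := henum
  set Q : Ordinal.{u} → UConstraint U κx Bsub → Prop := fun o d' =>
    ∀ h : o < μ, FilMem U κx d'.D d'.H (e ((Ordinal.ToType.mk (o := μ)) ⟨o, h⟩)) ∨
      FilMem U κx d'.D d'.H (fun i => (e ((Ordinal.ToType.mk (o := μ)) ⟨o, h⟩) i)ᶜ) with hQdef
  have hQ : ∀ o : Ordinal.{u}, o ≤ μ → ∀ d : UConstraint U κx Bsub,
      ∃ d', leU d' d ∧ Q o d' := by
    intro o _ d
    by_cases h : o < μ
    · obtain ⟨d', hd'1, hd'2⟩ :=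
        decideU hinf hcompl d (e ((Ordinal.ToType.mk (o := μ)) ⟨o, h⟩)) (he1 _)
      exact ⟨d', hd'1, fun _ => hd'2⟩
    · exact ⟨d, leU_refl d, fun h' => absurd h' h⟩
  have hexG := exG c Q hlb hQ
  have hGspec : ∀ o' (h : o' < μ), leU (seqG c Q o') c ∧
      (∀ o'' (_ : o'' < o'), leU (seqG c Q o') (seqG c Q o'')) ∧ Q o' (seqG c Q o') := by
    intro o' h
    have hex := hexG o' h.le
    rw [seqG_eq, dif_pos hex]
    exact hex.choose_spec
  set g : μ.ToType → UConstraint U κx Bsub :=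
    fun p => seqG c Q ((Ordinal.ToType.mk (o := μ)).symm p).1 with hg
  have hganti : ∀ p q : μ.ToType, p ≤ q → leU (g q) (g p) := by
    intro p q hpq
    rcases eq_or_lt_of_le hpq with rfl | hlt
    · exact leU_refl _
    · have hlt' : ((Ordinal.ToType.mk (o := μ)).symm p).1 <
          ((Ordinal.ToType.mk (o := μ)).symm q).1 := by
        exact_mod_cast (Ordinal.ToType.mk (o := μ)).symm.lt_iff_lt.2 hlt
      exact (hGspec _ ((Ordinal.ToType.mk (o := μ)).symm q).2).2.1 _ hlt'
  obtain ⟨c', hc'⟩ := hlb μ le_rfl g hganti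
  have hc'' : ∀ o' (ho' : o' < μ), leU c' (seqG c Q o') := by
    intro o' ho'
    have := hc' ((Ordinal.ToType.mk (o := μ)) ⟨o', ho'⟩)
    simpa only [hg, OrderIso.symm_apply_apply] using this
  have hμpos : (0 : Ordinal.{u}) < μ := by
    rw [hμ]
    rw [← Cardinal.ord_zero]
    exact Cardinal.ord_lt_ord.2 (Cardinal.power_pos κ two_pos)
  refine ⟨c', leU_trans (hc'' 0 hμpos) (hGspec 0 hμpos).1, filMem_proper c', ?_⟩
  intro f hf
  obtain ⟨ζ, hζ⟩ := he2 f hf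
  set o' : Ordinal.{u} := ((Ordinal.ToType.mk (o := μ)).symm ζ).1 with ho'
  have ho'lt : o' < μ := ((Ordinal.ToType.mk (o := μ)).symm ζ).2
  have hQo : Q o' (seqG c Q o') := (hGspec o' ho'lt).2.2
  have hback : (Ordinal.ToType.mk (o := μ)) ⟨o', ho'lt⟩ = ζ := by
    have : (⟨o', ho'lt⟩ : Set.Iio μ) = (Ordinal.ToType.mk (o := μ)).symm ζ := rfl
    rw [this, OrderIso.apply_symm_apply]
  have := hQo ho'lt
  rw [hback] at this
  have hle : leU c' (seqG c Q o') := hc'' o' ho'lt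
  have hζ' : {i | (fun i => (e ζ i)ᶜ) i = (fun i => (f i)ᶜ) i} ∈ U.map κx :=
    Filter.mem_of_superset hζ fun i hi => by simp [Set.mem_setOf_eq] at hi ⊢; rw [hi]
  rcases this with h | h
  · exact Or.inl (filMem_congr hζ (filMem_mono hle h))
  · exact Or.inr (filMem_congr hζ' (filMem_mono hle h))
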